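/- arXiv:2511.06432 — 2 statements merged into one kernel-verified Lean document; each statement's English description precedes it below -/
import Mathlib

section
/- (Miyadera–Gustafson theorem) Let (D(A), A) be a densely defined maximally dissipative operator on a Banach space 𝓑, and let (D(B), B) be a dissipative operator with D(A) ⊆ D(B) which is A-bounded with relative bound smaller than 1, i.e. there exist 0 ≤ a < 1 and b ≥ 0 such that ‖Bφ‖ ≤ a‖Aφ‖ + b‖φ‖ for all φ ∈ D(A). Then (D(A), A + B) is a maximally dissipative operator. -/
noncomputable section

variable {E : Type*} [NormedAddCommGroup E] [NormedSpace ℝ E]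

/-- An operator `T` with domain `D` is dissipative: `‖(λ - T)g‖ ≥ λ‖g‖` for `g ∈ D`, `λ > 0`. -/
def Dissipative (D : Submodule ℝ E) (T : D →ₗ[ℝ] E) : Prop :=
  ∀ g : D, ∀ lam : ℝ, 0 < lam → lam * ‖(g : E)‖ ≤ ‖lam • (g : E) - T g‖

/-- Maximally dissipative: dissipative and `λ - T : D → E` is surjective for every `λ > 0`. -/
def MaximallyDissipative (D : Submodule ℝ E) (T : D →ₗ[ℝ] E) : Prop :=
  Dissipative D T ∧ ∀ h : E, ∀ lam : ℝ, 0 < lam → ∃ g : D, lam • (g : E) - T g = h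

/-- difference estimate from dissipativity -/
lemma dissipative_sub {D : Submodule ℝ E} {T : D →ₗ[ℝ] E} (hT : Dissipative D T)
    {lam : ℝ} (hl : 0 < lam) (g g' : D) :
    lam * ‖(g : E) - (g' : E)‖ ≤ ‖(lam • (g : E) - T g) - (lam • (g' : E) - T g')‖ := by
  have := hT (g - g') lam hl
  have h1 : ((g - g' : D) : E) = (g : E) - (g' : E) := rfl
  rw [h1, map_sub] at this
  calc lam * ‖(g : E) - (g' : E)‖ ≤ ‖lam • ((g:E) - (g':E)) - (T g - T g')‖ := this
    _ = ‖(lam • (g : E) - T g) - (lam • (g' : E) - T g')‖ := by rw [smul_sub]; congr 1; abel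

lemma smul_dissipative {D : Submodule ℝ E} {T : D →ₗ[ℝ] E} (hT : Dissipative D T)
    {s : ℝ} (hs : 0 ≤ s) : Dissipative D (s • T) := by
  intro g lam hl
  rcases eq_or_lt_of_le hs with h | h
  · have : (s • T) g = 0 := by rw [← h]; simp
    rw [this, sub_zero, norm_smul, Real.norm_eq_abs, abs_of_pos hl]
  · have h0 := hT g (lam / s) (div_pos hl h)
    have h1 : s * ((lam / s) * ‖(g : E)‖) ≤ s * ‖(lam / s) • (g : E) - T g‖ :=
      mul_le_mul_of_nonneg_left h0 hs
    have h2 : s * ((lam / s) * ‖(g : E)‖) = lam * ‖(g : E)‖ := by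
      field_simp
    have h3 : s * ‖(lam / s) • (g : E) - T g‖ = ‖lam • (g : E) - (s • T) g‖ := by
      have he : lam • (g : E) - (s • T) g = s • ((lam / s) • (g : E) - T g) := by
        rw [LinearMap.smul_apply, smul_sub, smul_smul, mul_div_cancel₀ _ h.ne']
      rw [he, norm_smul, Real.norm_eq_abs, abs_of_pos h]
    rw [h2, h3] at h1
    exact h1

set_option maxHeartbeats 1000000 in
lemma approx_tangent
    {DA DB : Submodule ℝ E} (hdense : Dense (DA : Set E)) (hsub : DA ≤ DB)
    {A : DA →ₗ[ℝ] E} {B : DB →ₗ[ℝ] E}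
    (hA : MaximallyDissipative DA A) (hB : Dissipative DB B)
    (x : DA) {ε : ℝ} (hε : 0 < ε) :
    ∃ f : E →L[ℝ] ℝ, ‖f‖ ≤ 1 ∧ ‖(x : E)‖ - ε ≤ f x ∧ f (A x) ≤ ε ∧
      f (B (Submodule.inclusion hsub x)) ≤ ε := by
  obtain ⟨hAd, hAs⟩ := hA
  rcases eq_or_ne ((x : DA) : E) 0 with hx0 | hx0
  · refine ⟨0, by simp, ?_, by simpa using hε.le, by simpa using hε.le⟩
    simp only [ContinuousLinearMap.zero_apply, hx0, norm_zero, zero_sub]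
    linarith
  have hxpos : 0 < ‖(x : E)‖ := norm_pos_iff.mpr hx0
  set ε2 : ℝ := ε / 2 with hε2def
  have hε2 : 0 < ε2 := by positivity
  set z : E := A x with hz
  obtain ⟨w', hw'mem, hw'd⟩ := hdense.exists_dist_lt z (show (0:ℝ) < ε2 / 4 by positivity)
  set w : DA := ⟨w', hw'mem⟩ with hwdef
  have hwz : ‖z - (w : E)‖ < ε2 / 4 := by rw [← dist_eq_norm]; exact hw'd
  set lam0 : ℝ := 4 * (‖A w‖ + 1) / ε2 with hlam0
  have hlam0pos : 0 < lam0 := by positivity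
  obtain ⟨p, hp⟩ := hAs z lam0 hlam0pos
  obtain ⟨q, hq⟩ := hAs (w : E) lam0 hlam0pos
  have est1 : lam0 * ‖(p : E) - (q : E)‖ ≤ ‖z - (w : E)‖ := by
    have := dissipative_sub hAd hlam0pos p q
    rwa [hp, hq] at this
  have hAq : A q = lam0 • (q : E) - (w : E) := by rw [← hq]; abel
  set sElt : DA := lam0 • q - w with hsElt
  have hsc : ((sElt : DA) : E) = lam0 • (q : E) - (w : E) := rfl
  have hsA : lam0 • ((sElt : DA) : E) - A sElt = A w := by
    rw [hsc, hsElt, map_sub, map_smul, hAq]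
    abel
  have est2 : ‖lam0 • (q : E) - (w : E)‖ ≤ ‖A w‖ / lam0 := by
    have h1 := hAd sElt lam0 hlam0pos
    rw [hsA, hsc] at h1
    rw [le_div_iff₀ hlam0pos]
    rw [mul_comm] at h1
    exact h1
  have hAwlam : ‖A w‖ / lam0 < ε2 / 4 := by
    rw [div_lt_iff₀ hlam0pos]
    have he : ε2 / 4 * lam0 = ‖A w‖ + 1 := by
      rw [hlam0]; field_simp
    rw [he]
    linarith
  have est3 : ‖lam0 • (p : E) - z‖ < ε2 := by
    have t1 : ‖lam0 • (p : E) - lam0 • (q : E)‖ < ε2 / 4 := by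
      rw [← smul_sub, norm_smul, Real.norm_eq_abs, abs_of_pos hlam0pos]
      calc lam0 * ‖(p : E) - (q : E)‖ ≤ ‖z - (w : E)‖ := est1
        _ < ε2 / 4 := hwz
    have t2 : ‖lam0 • (q : E) - (w : E)‖ < ε2 / 4 := lt_of_le_of_lt est2 hAwlam
    have t3 : ‖(w : E) - z‖ < ε2 / 4 := by rw [norm_sub_rev]; exact hwz
    calc ‖lam0 • (p : E) - z‖
        ≤ ‖lam0 • (p : E) - lam0 • (q : E)‖ + ‖lam0 • (q : E) - z‖ :=
          norm_sub_le_norm_sub_add_norm_sub _ _ _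
      _ ≤ ‖lam0 • (p : E) - lam0 • (q : E)‖ + (‖lam0 • (q : E) - (w : E)‖ + ‖(w : E) - z‖) := by
          linarith [norm_sub_le_norm_sub_add_norm_sub (lam0 • (q : E)) (w : E) z]
      _ < ε2 := by linarith
  set u : DA := p + x with hu
  have huc : ((u : DA) : E) = (p : E) + (x : E) := rfl
  have hAp : A p = lam0 • (p : E) - z := by rw [← hp]; abel
  have hAu : A u = lam0 • (p : E) := by
    rw [hu, map_add, hAp, ← hz]
    abel
  have hAux : ‖A u - A x‖ < ε2 := by rw [hAu, ← hz]; exact est3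
  have hunorm : ‖((u : DA) : E)‖ ≤ ‖(x : E)‖ := by
    have h1 := hAd u lam0 hlam0pos
    have e : lam0 • ((u : DA) : E) - A u = lam0 • (x : E) := by
      rw [huc, hAu, smul_add]; abel
    rw [e, norm_smul, Real.norm_eq_abs, abs_of_pos hlam0pos] at h1
    exact le_of_mul_le_mul_left h1 hlam0pos
  set xt := Submodule.inclusion hsub x with hxt
  have hxtc : ((xt : DB) : E) = (x : E) := rfl
  set mu : ℝ := (lam0 + 1) * (‖B xt‖ + 1) / ε2 with hmu
  have hmupos : 0 < mu := by positivity
  have hmue : mu * ε2 = (lam0 + 1) * (‖B xt‖ + 1) := by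
    rw [hmu, div_mul_cancel₀ _ hε2.ne']
  set y : E := mu • (x : E) - B xt with hy
  have hyn : mu * ‖(x : E)‖ ≤ ‖y‖ := by
    have h1 := hB xt mu hmupos
    rwa [hxtc] at h1
  have hy0 : y ≠ 0 := by
    intro h0
    rw [h0, norm_zero] at hyn
    nlinarith
  obtain ⟨f, hf1, hfy⟩ := exists_dual_vector ℝ y (norm_ne_zero_iff.mpr hy0)
  have hfy' : f y = ‖y‖ := by exact_mod_cast hfy
  have hfv : ∀ v : E, |f v| ≤ ‖v‖ := by
    intro v
    calc |f v| = ‖f v‖ := rfl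
      _ ≤ ‖f‖ * ‖v‖ := f.le_opNorm v
      _ = ‖v‖ := by rw [hf1, one_mul]
  have hfyd : f y = mu * f (x : E) - f (B xt) := by
    rw [hy, map_sub, map_smul, smul_eq_mul]
  have hB0 : (0:ℝ) ≤ ‖B xt‖ := norm_nonneg _
  have k1 : ‖(x : E)‖ - ‖B xt‖ / mu ≤ f (x : E) := by
    have h1 : mu * f (x : E) = ‖y‖ + f (B xt) := by rw [← hfy', hfyd]; ring
    have h2 : -(‖B xt‖) ≤ f (B xt) := (abs_le.mp (hfv _)).1
    have h3 : mu * (‖(x : E)‖ - ‖B xt‖ / mu) ≤ mu * f (x : E) := by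
      have he : mu * (‖(x : E)‖ - ‖B xt‖ / mu) = mu * ‖(x : E)‖ - ‖B xt‖ := by
        field_simp
      rw [he, h1]
      linarith
    exact le_of_mul_le_mul_left h3 hmupos
  have k2 : f (B xt) ≤ 0 := by
    have h1 : f (B xt) = mu * f (x : E) - ‖y‖ := by rw [← hfy', hfyd]; ring
    have h2 : f (x : E) ≤ ‖(x : E)‖ := le_trans (le_abs_self _) (hfv _)
    nlinarith
  have k3 : f (A u) ≤ lam0 * (‖B xt‖ / mu) := by
    have hfu : f ((u : DA) : E) = f (p : E) + f (x : E) := by rw [huc, map_add]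
    have h1 : f (A u) = lam0 * (f ((u : DA) : E) - f (x : E)) := by
      rw [hAu, map_smul, smul_eq_mul, hfu]; ring
    have h2 : f ((u : DA) : E) ≤ ‖(x : E)‖ :=
      le_trans (le_trans (le_abs_self _) (hfv _)) hunorm
    rw [h1]
    have h3 : f ((u : DA) : E) - f (x : E) ≤ ‖B xt‖ / mu := by linarith
    exact mul_le_mul_of_nonneg_left h3 hlam0pos.le
  have klam : lam0 * (‖B xt‖ / mu) ≤ ε2 := by
    rw [mul_div_assoc', div_le_iff₀ hmupos]
    nlinarith
  have kmu : ‖B xt‖ / mu ≤ ε2 := by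
    rw [div_le_iff₀ hmupos]
    nlinarith
  have k4 : f (A x) ≤ ε := by
    have h4 : f (A x) = f (A u) + f (A x - A u) := by rw [map_sub]; ring
    have h5 : f (A x - A u) ≤ ‖A x - A u‖ := le_trans (le_abs_self _) (hfv _)
    have h6 : ‖A x - A u‖ < ε2 := by rw [norm_sub_rev]; exact hAux
    have h7 : ε2 + ε2 = ε := by rw [hε2def]; ring
    linarith
  refine ⟨f, le_of_eq hf1, ?_, k4, le_trans k2 hε.le⟩
  have h8 : ε2 ≤ ε := by rw [hε2def]; linarith
  linarith

lemma sum_dissipative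
    {DA DB : Submodule ℝ E} (hdense : Dense (DA : Set E)) (hsub : DA ≤ DB)
    {A : DA →ₗ[ℝ] E} {B : DB →ₗ[ℝ] E}
    (hA : MaximallyDissipative DA A) (hB : Dissipative DB B) :
    Dissipative DA (A + B.comp (Submodule.inclusion hsub)) := by
  intro x lam hlam
  refine le_of_forall_pos_le_add ?_
  intro ε hε
  set ε' : ℝ := ε / (lam + 2) with hε'
  have hε'0 : 0 < ε' := div_pos hε (by linarith)
  obtain ⟨f, hf1, hfx, hfA, hfB⟩ := approx_tangent hdense hsub hA hB x hε'0
  have hfv : ∀ v : E, f v ≤ ‖v‖ := by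
    intro v
    calc f v ≤ |f v| := le_abs_self _
      _ = ‖f v‖ := rfl
      _ ≤ ‖f‖ * ‖v‖ := f.le_opNorm v
      _ ≤ 1 * ‖v‖ := mul_le_mul_of_nonneg_right hf1 (norm_nonneg _)
      _ = ‖v‖ := one_mul _
  have e0 : (A + B.comp (Submodule.inclusion hsub)) x
      = A x + B (Submodule.inclusion hsub x) := rfl
  have e1 : f (lam • (x : E) - (A + B.comp (Submodule.inclusion hsub)) x)
      = lam * f x - f (A x) - f (B (Submodule.inclusion hsub x)) := by
    rw [e0, map_sub, map_add, map_smul]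
    simp [smul_eq_mul]
    ring
  have e2 := hfv (lam • (x : E) - (A + B.comp (Submodule.inclusion hsub)) x)
  have e3 : lam * (‖(x : E)‖ - ε') ≤ lam * f x := mul_le_mul_of_nonneg_left hfx hlam.le
  have e4 : ε' * (lam + 2) = ε := div_mul_cancel₀ ε (by linarith : lam + 2 ≠ 0)
  nlinarith [hfA, hfB]

lemma surj_step [CompleteSpace E] {D : Submodule ℝ E} {T : D →ₗ[ℝ] E}
    (hT : Dissipative D T) {mu : ℝ} (hmu : 0 < mu)
    (hs : ∀ h : E, ∃ g : D, mu • (g : E) - T g = h)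
    {lam : ℝ} (hcl : |lam - mu| < mu) :
    ∀ h : E, ∃ g : D, lam • (g : E) - T g = h := by
  intro h
  set R : E → D := fun v => (hs v).choose with hR
  have hRv : ∀ v : E, mu • ((R v : D) : E) - T (R v) = v := fun v => (hs v).choose_spec
  set Φ : E → E := fun v => h - (lam - mu) • ((R v : D) : E) with hΦ
  have hlip : ∀ v v' : E, dist (Φ v) (Φ v') ≤ (|lam - mu| / mu) * dist v v' := by
    intro v v'
    have hd := dissipative_sub hT hmu (R v) (R v')
    rw [hRv, hRv] at hd
    have : dist (Φ v) (Φ v') = |lam - mu| * ‖((R v : D) : E) - ((R v' : D) : E)‖ := by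
      rw [dist_eq_norm]
      have : Φ v - Φ v' = (lam - mu) • (((R v' : D) : E) - ((R v : D) : E)) := by
        simp only [hΦ, smul_sub]
        abel
      rw [this, norm_smul, Real.norm_eq_abs, norm_sub_rev]
    rw [this, dist_eq_norm, div_mul_eq_mul_div, le_div_iff₀ hmu]
    calc |lam - mu| * ‖((R v : D) : E) - ((R v' : D) : E)‖ * mu
        = |lam - mu| * (mu * ‖((R v : D) : E) - ((R v' : D) : E)‖) := by ring
      _ ≤ |lam - mu| * ‖v - v'‖ := by
          exact mul_le_mul_of_nonneg_left hd (abs_nonneg _)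
      _ = ‖v - v'‖ * |lam - mu| := by ring
      _ = |lam - mu| * ‖v - v'‖ := by ring
  have hK0 : 0 ≤ |lam - mu| / mu := div_nonneg (abs_nonneg _) hmu.le
  set K : NNReal := ⟨|lam - mu| / mu, hK0⟩ with hKdef
  have hK1 : K < 1 := by
    rw [← NNReal.coe_lt_coe]
    show |lam - mu| / mu < 1
    rw [div_lt_one hmu]
    exact hcl
  have hcontr : ContractingWith K Φ :=
    ⟨hK1, LipschitzWith.of_dist_le_mul (fun v v' => hlip v v')⟩
  have : Nonempty E := ⟨0⟩
  obtain ⟨v, hv⟩ := hcontr.exists_fixedPoint 0 (by simp [edist_ne_top])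
  refine ⟨R v, ?_⟩
  have hfix : Φ v = v := hv.1
  have h1 : mu • ((R v : D) : E) - T (R v) = v := hRv v
  have h2 : h - (lam - mu) • ((R v : D) : E) = v := hfix
  have : lam • ((R v : D) : E) - T (R v)
      = (mu • ((R v : D) : E) - T (R v)) + (lam - mu) • ((R v : D) : E) := by
    rw [sub_smul]; abel
  rw [this, h1]
  nth_rewrite 1 [← h2]
  abel

lemma surj_extend [CompleteSpace E] {D : Submodule ℝ E} {T : D →ₗ[ℝ] E}
    (hT : Dissipative D T) (h1 : ∀ h : E, ∃ g : D, (1 : ℝ) • (g : E) - T g = h) :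
    ∀ h : E, ∀ lam : ℝ, 0 < lam → ∃ g : D, lam • (g : E) - T g = h := by
  have key : ∀ n : ℕ, ∀ h : E, ∃ g : D, ((3 / 2 : ℝ) ^ n) • (g : E) - T g = h := by
    intro n
    induction n with
    | zero => simpa using h1
    | succ n ih =>
        have hmu : (0 : ℝ) < (3 / 2 : ℝ) ^ n := pow_pos (by norm_num) n
        refine surj_step hT hmu ih ?_
        have : (3 / 2 : ℝ) ^ (n + 1) - (3 / 2 : ℝ) ^ n = (1 / 2) * (3 / 2 : ℝ) ^ n := by
          rw [pow_succ]; ring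
        rw [this, abs_of_pos (by positivity)]
        nlinarith
  intro h lam hlam
  obtain ⟨n, hn⟩ := pow_unbounded_of_one_lt lam (by norm_num : (1 : ℝ) < 3 / 2)
  have hmu : (0 : ℝ) < (3 / 2 : ℝ) ^ n := pow_pos (by norm_num) n
  refine surj_step hT hmu (key n) ?_ h
  rw [abs_lt]
  constructor <;> linarith

lemma surj_perturb [CompleteSpace E] {DA DB : Submodule ℝ E} (hsub : DA ≤ DB)
    {T : DA →ₗ[ℝ] E} {B : DB →ₗ[ℝ] E} (hT : Dissipative DA T)
    (hs1 : ∀ h : E, ∃ g : DA, (1 : ℝ) • (g : E) - T g = h)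
    {a' b' s : ℝ} (hs0 : 0 ≤ s) (ha' : 0 ≤ a') (hb' : 0 ≤ b')
    (hbd : ∀ φ : DA, ‖B (Submodule.inclusion hsub φ)‖ ≤ a' * ‖T φ‖ + b' * ‖(φ : E)‖)
    (hcontr : s * (2 * a' + b') < 1) :
    ∀ h : E, ∃ g : DA, (1 : ℝ) • (g : E) - (T + (s • B).comp (Submodule.inclusion hsub)) g = h := by
  intro h
  set R : E → DA := fun v => (hs1 v).choose with hR
  have hRv : ∀ v : E, (1 : ℝ) • ((R v : DA) : E) - T (R v) = v := fun v => (hs1 v).choose_spec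
  have hRv' : ∀ v : E, ((R v : DA) : E) - T (R v) = v := by
    intro v; have := hRv v; rwa [one_smul] at this
  set c : ℝ := s * (2 * a' + b') with hc
  have hc0 : 0 ≤ c := by positivity
  set Φ : E → E := fun v => h + s • (B (Submodule.inclusion hsub (R v))) with hΦ
  have hlip : ∀ v v' : E, dist (Φ v) (Φ v') ≤ c * dist v v' := by
    intro v v'
    set φ : DA := R v - R v' with hφ
    have hφc : ((φ : DA) : E) = ((R v : DA) : E) - ((R v' : DA) : E) := rfl
    have hφT : T φ = T (R v) - T (R v') := by rw [hφ, map_sub]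
    have e1 : ((φ : DA) : E) - T φ = v - v' := by
      calc ((φ : DA) : E) - T φ
          = (((R v : DA) : E) - T (R v)) - (((R v' : DA) : E) - T (R v')) := by
            rw [hφc, hφT]; abel
        _ = v - v' := by rw [hRv' v, hRv' v']
    have hφn : ‖((φ : DA) : E)‖ ≤ ‖v - v'‖ := by
      have := hT φ 1 one_pos
      rw [one_smul, one_mul, e1] at this
      exact this
    have hφTn : ‖T φ‖ ≤ 2 * ‖v - v'‖ := by
      have : T φ = ((φ : DA) : E) - (v - v') := by rw [← e1]; abel
      rw [this]
      calc ‖((φ : DA) : E) - (v - v')‖ ≤ ‖((φ : DA) : E)‖ + ‖v - v'‖ := norm_sub_le _ _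
        _ ≤ 2 * ‖v - v'‖ := by linarith
    have hBn : ‖B (Submodule.inclusion hsub φ)‖ ≤ (2 * a' + b') * ‖v - v'‖ := by
      calc ‖B (Submodule.inclusion hsub φ)‖ ≤ a' * ‖T φ‖ + b' * ‖((φ : DA) : E)‖ := hbd φ
        _ ≤ a' * (2 * ‖v - v'‖) + b' * ‖v - v'‖ := by
            have := mul_le_mul_of_nonneg_left hφTn ha'
            have := mul_le_mul_of_nonneg_left hφn hb'
            linarith
        _ = (2 * a' + b') * ‖v - v'‖ := by ring
    have hΦd : Φ v - Φ v' = s • (B (Submodule.inclusion hsub φ)) := by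
      simp only [hΦ]
      rw [hφ, map_sub, map_sub, smul_sub]
      abel
    rw [dist_eq_norm, dist_eq_norm, hΦd, norm_smul, Real.norm_eq_abs, abs_of_nonneg hs0]
    calc s * ‖B (Submodule.inclusion hsub φ)‖ ≤ s * ((2 * a' + b') * ‖v - v'‖) :=
          mul_le_mul_of_nonneg_left hBn hs0
      _ = c * ‖v - v'‖ := by ring
  set K : NNReal := ⟨c, hc0⟩ with hKdef
  have hK1 : K < 1 := by
    rw [← NNReal.coe_lt_coe]; exact hcontr
  have hcw : ContractingWith K Φ := ⟨hK1, LipschitzWith.of_dist_le_mul hlip⟩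
  have : Nonempty E := ⟨0⟩
  obtain ⟨v, hv⟩ := hcw.exists_fixedPoint 0 (by simp [edist_ne_top])
  have hfix : h + s • (B (Submodule.inclusion hsub (R v))) = v := hv.1
  refine ⟨R v, ?_⟩
  have happ : (T + (s • B).comp (Submodule.inclusion hsub)) (R v)
      = T (R v) + s • (B (Submodule.inclusion hsub (R v))) := by
    simp [LinearMap.add_apply, LinearMap.comp_apply, LinearMap.smul_apply]
  have hkey : ((R v : DA) : E) - T (R v) = h + s • (B (Submodule.inclusion hsub (R v))) := by
    rw [hRv' v]; exact hfix.symm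
  rw [one_smul, happ, sub_add_eq_sub_sub, hkey]
  abel


/-- **Miyadera–Gustafson theorem.** If `A` is a densely defined maximally dissipative
operator on a Banach space, and `B` is dissipative and `A`-bounded with relative bound
smaller than `1`, then `A + B` (with domain `D(A)`) is maximally dissipative. -/
theorem miyadera_gustafson {E : Type*} [NormedAddCommGroup E] [NormedSpace ℝ E]
    [CompleteSpace E]
    (DA DB : Submodule ℝ E) (hdense : Dense (DA : Set E)) (hsub : DA ≤ DB)
    (A : DA →ₗ[ℝ] E) (B : DB →ₗ[ℝ] E)
    (hA : MaximallyDissipative DA A) (hB : Dissipative DB B)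
    (a b : ℝ) (ha0 : 0 ≤ a) (ha1 : a < 1) (hb0 : 0 ≤ b)
    (hbound : ∀ φ : DA, ‖B (Submodule.inclusion hsub φ)‖ ≤ a * ‖A φ‖ + b * ‖(φ : E)‖) :
    MaximallyDissipative DA (A + B.comp (Submodule.inclusion hsub)) := by
  have h1a : (0:ℝ) < 1 - a := by linarith
  set a' : ℝ := a / (1 - a) with ha'
  set b' : ℝ := b / (1 - a) with hb'
  have ha'0 : 0 ≤ a' := div_nonneg ha0 h1a.le
  have hb'0 : 0 ≤ b' := div_nonneg hb0 h1a.le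
  set δ : ℝ := 1 / (2 * a' + b' + 1) with hδ
  have hden : (0:ℝ) < 2 * a' + b' + 1 := by linarith
  have hδ0 : 0 < δ := by positivity
  set B' : DA →ₗ[ℝ] E := B.comp (Submodule.inclusion hsub) with hB'
  have hbd' : ∀ t : ℝ, 0 ≤ t → t ≤ 1 → ∀ φ : DA,
      ‖B (Submodule.inclusion hsub φ)‖ ≤ a' * ‖(A + t • B') φ‖ + b' * ‖(φ : E)‖ := by
    intro t ht0 ht1 φ
    have h0 := hbound φ
    have happ : (A + t • B') φ = A φ + t • (B (Submodule.inclusion hsub φ)) := by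
      simp [hB', LinearMap.add_apply, LinearMap.smul_apply, LinearMap.comp_apply]
    have hAφ : ‖A φ‖ ≤ ‖(A + t • B') φ‖ + t * ‖B (Submodule.inclusion hsub φ)‖ := by
      have he : A φ = (A + t • B') φ - t • (B (Submodule.inclusion hsub φ)) := by
        rw [happ]; abel
      rw [he]
      calc ‖(A + t • B') φ - t • (B (Submodule.inclusion hsub φ))‖
          ≤ ‖(A + t • B') φ‖ + ‖t • (B (Submodule.inclusion hsub φ))‖ := norm_sub_le _ _
        _ = ‖(A + t • B') φ‖ + t * ‖B (Submodule.inclusion hsub φ)‖ := by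
            rw [norm_smul, Real.norm_eq_abs, abs_of_nonneg ht0]
    rw [ha', hb', div_mul_eq_mul_div, div_mul_eq_mul_div, ← add_div, le_div_iff₀ h1a]
    have hZ0 : (0:ℝ) ≤ ‖B (Submodule.inclusion hsub φ)‖ := norm_nonneg _
    nlinarith [mul_le_mul_of_nonneg_left hAφ ha0,
      mul_nonneg (mul_nonneg ha0 hZ0) (sub_nonneg.mpr ht1)]
  have key : ∀ n : ℕ, MaximallyDissipative DA (A + min 1 ((n : ℝ) * δ) • B') := by
    intro n
    induction n with
    | zero =>
        have he : min (1:ℝ) ((0:ℕ) * δ) = 0 := by norm_num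
        rw [he, zero_smul, add_zero]
        exact hA
    | succ n ih =>
        push_cast
        set t : ℝ := min 1 ((n : ℝ) * δ) with ht
        set t' : ℝ := min 1 (((n : ℝ) + 1) * δ) with ht'
        set s : ℝ := t' - t with hsdef
        have ht0 : 0 ≤ t := le_min zero_le_one (by positivity)
        have ht1 : t ≤ 1 := min_le_left _ _
        have htt' : t ≤ t' := by
          refine min_le_min le_rfl ?_
          have : (n : ℝ) ≤ (n : ℝ) + 1 := by linarith
          nlinarith
        have ht'δ : t' ≤ t + δ := by
          rcases le_total ((n : ℝ) * δ) 1 with h | h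
          · have htn : t = (n : ℝ) * δ := min_eq_right h
            calc t' ≤ ((n : ℝ) + 1) * δ := min_le_right _ _
              _ = t + δ := by rw [htn]; ring
          · have htn : t = 1 := min_eq_left h
            calc t' ≤ 1 := min_le_left _ _
              _ ≤ t + δ := by rw [htn]; linarith
        have hs0 : 0 ≤ s := sub_nonneg.mpr htt'
        have hsδ : s ≤ δ := by rw [hsdef]; linarith
        have heq : A + t' • B' = (A + t • B') + (s • B).comp (Submodule.inclusion hsub) := by
          have h1 : (s • B).comp (Submodule.inclusion hsub) = s • B' := by
            rw [hB', LinearMap.smul_comp]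
          rw [h1, show t' = t + s by rw [hsdef]; ring, add_smul]
          abel
        rw [heq]
        have hdiss : Dissipative DA ((A + t • B') + (s • B).comp (Submodule.inclusion hsub)) :=
          sum_dissipative hdense hsub ih (smul_dissipative hB hs0)
        refine ⟨hdiss, ?_⟩
        have hcontr : s * (2 * a' + b') < 1 := by
          have hδe : δ * (2 * a' + b' + 1) = 1 := by
            rw [hδ]; field_simp
          nlinarith [mul_le_mul_of_nonneg_right hsδ (by linarith : (0:ℝ) ≤ 2 * a' + b')]
        exact surj_extend hdiss
          (surj_perturb hsub ih.1 (fun h => ih.2 h 1 one_pos) hs0 ha'0 hb'0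
            (hbd' t ht0 ht1) hcontr)
  obtain ⟨n, hn⟩ := exists_nat_ge (1 / δ)
  have h1n : 1 ≤ (n : ℝ) * δ := by
    rw [div_le_iff₀ hδ0] at hn
    linarith
  have hfin := key n
  rwa [min_eq_left h1n, one_smul] at hfin

end
end

section
/- Let u ∈ L²₊(ℝ) and λ > 0. The operator K_λ : L^∞(ℝ) → L^∞(ℝ) defined by K_λ(a)(x) = −i ∫_{−∞}^x e^{−iλy} u(y) Π(ū e^{iλ·} a)(y) dy is a compact operator on L^∞(ℝ). -/
open MeasureTheory Complex Filter Topology Set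
open scoped ENNReal

noncomputable section

/-- Fourier transform with the convention `FT f ξ = ∫ e^{-iξx} f x dx`. -/
def FT (f : ℝ → ℂ) (ξ : ℝ) : ℂ :=
  ∫ x : ℝ, Complex.exp (-(Complex.I) * ξ * x) * f x

/-- The tempered-distributional Fourier transform of `f` is (represented by) the function `F`. -/
def IsDistribFT (f F : ℝ → ℂ) : Prop :=
  ∀ φ : SchwartzMap ℝ ℂ, ∫ ξ : ℝ, F ξ * φ ξ = ∫ x : ℝ, f x * FT (fun η => φ η) x

/-- `f ∈ L^p_+(ℝ)` : `f ∈ L^p` and the distributional Fourier transform of `f` is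
supported in `[0,∞)` (it vanishes against every Schwartz function vanishing on `[0,∞)`). -/
def HardyLp (p : ℝ≥0∞) (f : ℝ → ℂ) : Prop :=
  MemLp f p (volume : Measure ℝ) ∧
    ∀ φ : SchwartzMap ℝ ℂ, (∀ ξ : ℝ, 0 ≤ ξ → φ ξ = 0) →
      ∫ x : ℝ, f x * FT (fun η => φ η) x = 0

/-- The weight condition `|x|^α f ∈ L²(ℝ)`. -/
def WeightedL2 (α : ℝ) (f : ℝ → ℂ) : Prop :=
  MemLp (fun x : ℝ => ((|x| ^ α : ℝ) : ℂ) * f x) 2 (volume : Measure ℝ)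

/-- `Pi` is (an everywhere-defined representative of) the Szegő projector:
for `g ∈ L²`, `Pi g` belongs to the Hardy space `L²₊` and `g - Pi g ⟂ L²₊`. -/
def IsSzego (Pi : (ℝ → ℂ) → ℝ → ℂ) : Prop :=
  ∀ g : ℝ → ℂ, MemLp g 2 (volume : Measure ℝ) →
    HardyLp 2 (Pi g) ∧
      ∀ h : ℝ → ℂ, HardyLp 2 h →
        ∫ x : ℝ, (g x - Pi g x) * (starRingEnd ℂ) (h x) = 0

/-- Szegő projector of a nice (e.g. Schwartz) function, by the explicit formula
`Π g (x) = (2π)⁻¹ ∫_0^∞ e^{ixξ} ĝ(ξ) dξ`. -/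
def SzegoSmooth (g : ℝ → ℂ) (x : ℝ) : ℂ :=
  (1 / (2 * (Real.pi : ℂ))) * ∫ ξ in Ioi (0 : ℝ), Complex.exp (Complex.I * x * ξ) * FT g ξ

/-- `(L_u - λ) m = r` in the distributional sense, where `L_u = D + u T_{ū}`,
`D = -i d/dx`. -/
def LaxEqWith (Pi : (ℝ → ℂ) → ℝ → ℂ) (u : ℝ → ℂ) (lam : ℝ) (m r : ℝ → ℂ) : Prop :=
  ∀ φ : SchwartzMap ℝ ℂ,
    Complex.I * (∫ x : ℝ, m x * deriv (fun y => φ y) x)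
        + (∫ x : ℝ, u x * Pi (fun y => (starRingEnd ℂ) (u y) * m y) x * φ x)
      = (lam : ℂ) * (∫ x : ℝ, m x * φ x) + ∫ x : ℝ, r x * φ x

/-- `(L_u - λ) m = 0` in the distributional sense. -/
def LaxEq (Pi : (ℝ → ℂ) → ℝ → ℂ) (u : ℝ → ℂ) (lam : ℝ) (m : ℝ → ℂ) : Prop :=
  LaxEqWith Pi u lam m (fun _ => 0)

/-- `m` is a generalized eigenfunction of `L_u` at energy `λ`, bounded, with Fourier
support in `[0,∞)`, normalised by `e^{-iλx} m(x) → ℓ` as `x → -∞`. -/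
def IsJostWith (Pi : (ℝ → ℂ) → ℝ → ℂ) (u : ℝ → ℂ) (lam : ℝ) (ℓ : ℂ) (m : ℝ → ℂ) : Prop :=
  HardyLp ⊤ m ∧ LaxEq Pi u lam m ∧
    Tendsto (fun x : ℝ => Complex.exp (-(Complex.I) * lam * x) * m x) atBot (𝓝 ℓ)

/-- The canonical Jost function `m₋(·,λ)`, normalised by `ℓ = 1`. -/
def IsJost (Pi : (ℝ → ℂ) → ℝ → ℂ) (u : ℝ → ℂ) (lam : ℝ) (m : ℝ → ℂ) : Prop :=
  IsJostWith Pi u lam 1 m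

/-- Distorted Fourier transform, direct integral formula (valid for `f ∈ L¹₊`). -/
def dFT (mMinus : ℝ → ℝ → ℂ) (f : ℝ → ℂ) (lam : ℝ) : ℂ :=
  ∫ x : ℝ, f x * (starRingEnd ℂ) (mMinus x lam)

/-- `tf` is the distorted Fourier transform of the `L²` function `f`, characterised by
duality against the dense class `L¹₊ ∩ L²₊` (where the direct formula makes sense). -/
def IsdFTL2 (mMinus : ℝ → ℝ → ℂ) (f tf : ℝ → ℂ) : Prop :=
  MemLp tf 2 ((volume : Measure ℝ).restrict (Ioi 0)) ∧
    ∀ g : ℝ → ℂ, HardyLp 1 g → MemLp g 2 (volume : Measure ℝ) →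
      ∫ x : ℝ, f x * (starRingEnd ℂ) (g x)
        = (1 / (2 * (Real.pi : ℂ)))
            * ∫ lam in Ioi (0 : ℝ), tf lam * (starRingEnd ℂ) (dFT mMinus g lam)

/-- The operator `K_λ(a)(x) = -i ∫_{-∞}^x e^{-iλy} u(y) Π(ū e^{iλ·} a)(y) dy`. -/
def Kop (Pi : (ℝ → ℂ) → ℝ → ℂ) (u : ℝ → ℂ) (lam : ℝ) (a : ℝ → ℂ) (x : ℝ) : ℂ :=
  -(Complex.I) * ∫ y in Iic x,
      Complex.exp (-(Complex.I) * lam * y) * u y *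
        Pi (fun z => (starRingEnd ℂ) (u z) * Complex.exp (Complex.I * lam * z) * a z) y

/-- The holomorphic extension of a Hardy function to the upper half plane,
via the Cauchy integral `(2iπ)⁻¹ ∫ f(y)/(y-z) dy`. -/
def hardyExt (f : ℝ → ℂ) (z : ℂ) : ℂ :=
  (1 / (2 * (Real.pi : ℂ) * Complex.I)) * ∫ y : ℝ, f y / ((y : ℂ) - z)

/-- Weak (distributional) solution of the defocusing (CM-DNLS)
`i∂ₜu + ∂ₓ²u - 2 Π D(|u|²) u = 0`; `N t` represents `Π D(|u(t)|²)`. -/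
def IsWeakCMSol (u : ℝ → ℝ → ℂ) : Prop :=
  ∃ N : ℝ → ℝ → ℂ,
    (∀ t : ℝ, ∀ ψ : SchwartzMap ℝ ℂ,
        ∫ x : ℝ, N t x * ψ x =
          Complex.I * ∫ y : ℝ, ((‖u t y‖ : ℂ) ^ 2) *
            deriv (fun w : ℝ =>
              (starRingEnd ℂ) (SzegoSmooth (fun s => (starRingEnd ℂ) (ψ s)) w)) y) ∧
    (∀ t : ℝ, Integrable (fun x : ℝ => N t x * u t x) (volume : Measure ℝ)) ∧
    (∀ φ : SchwartzMap (ℝ × ℝ) ℂ,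
        ∫ t : ℝ, ∫ x : ℝ,
            u t x * (-(Complex.I) * deriv (fun s => φ (s, x)) t
                + deriv (deriv fun y => φ (t, y)) x)
          = 2 * ∫ t : ℝ, ∫ x : ℝ, N t x * u t x * φ (t, x))

/-- `u` is a global solution of the defocusing (CM-DNLS) in `C(ℝ, L²₊(ℝ))`
with initial datum `u₀`. -/
def IsCMFlow (u₀ : ℝ → ℂ) (u : ℝ → ℝ → ℂ) : Prop :=
  u 0 = u₀ ∧ (∀ t : ℝ, HardyLp 2 (u t)) ∧
    (∀ t₀ : ℝ,
      Tendsto (fun t => eLpNorm (fun x => u t x - u t₀ x) 2 (volume : Measure ℝ))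
        (𝓝 t₀) (𝓝 0)) ∧
    IsWeakCMSol u

/-- `S t = e^{it∂ₓ²} v` where `v̂ = tu` on `(0,∞)` and `0` on `(-∞,0)` :
the Fourier transform of `S t` is `1_{(0,∞)}(ξ) e^{-itξ²} tu ξ`. -/
def IsFreeEvolution (tu : ℝ → ℂ) (S : ℝ → ℝ → ℂ) : Prop :=
  ∀ t : ℝ, MemLp (S t) 2 (volume : Measure ℝ) ∧
    IsDistribFT (S t)
      ((Ioi (0:ℝ)).indicator fun ξ => Complex.exp (-(Complex.I) * t * ξ ^ 2) * tu ξ)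

/-- Principal-value Hilbert transform on the half line `(0,∞)` :
`Hg(λ) = π⁻¹ p.v. ∫_0^∞ g(μ)/(λ-μ) dμ`. -/
def IsPVHilbert (g Hg : ℝ → ℂ) : Prop :=
  ∀ lam : ℝ, 0 < lam →
    Tendsto (fun ε : ℝ => (Real.pi : ℂ)⁻¹ *
        ∫ μ in Ioi (0:ℝ) \ Ioo (lam - ε) (lam + ε), g μ / ((lam : ℂ) - μ))
      (𝓝[>] (0:ℝ)) (𝓝 (Hg lam))

/-- The explicit resolvent `(i∂_λ + 2tλ - z)⁻¹`. -/
def freeResolvent (t : ℝ) (z : ℂ) (w : ℝ → ℂ) (lam : ℝ) : ℂ :=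
  Complex.I * Complex.exp (Complex.I * t * lam ^ 2 - Complex.I * z * lam) *
    ∫ η in Ioi lam, Complex.exp (-(Complex.I) * t * η ^ 2 + Complex.I * z * η) * w η

/-- The operator `B(ũ) f = -(1/4π) (i ũ H(ū̃ f) - |ũ|² f)`, where `Hf` is a given
realisation of the half-line Hilbert transform of `conj ũ · f`. -/
def Bop (tu : ℝ → ℂ) (f Hf : ℝ → ℂ) (lam : ℝ) : ℂ :=
  -(1 / (4 * (Real.pi : ℂ))) *
    (Complex.I * tu lam * Hf lam - ((‖tu lam‖ : ℂ)) ^ 2 * f lam)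

end
namespace KopAux
noncomputable def nr2 {α : Type*} [MeasurableSpace α] (f : α → ℂ) (μ : Measure α) : ℝ :=
  (eLpNorm f 2 μ).toReal
variable {α : Type*} [MeasurableSpace α] {μ : Measure α} {f g : α → ℂ}
lemma nr2_nonneg : 0 ≤ nr2 f μ := ENNReal.toReal_nonneg
lemma two_conj : (2:ℝ).HolderConjugate 2 := Real.holderConjugate_iff.mpr ⟨one_lt_two, by norm_num⟩
lemma memLp2' (hf : MemLp f 2 μ) : MemLp f (ENNReal.ofReal (2:ℝ)) μ := by
  have : ENNReal.ofReal (2:ℝ) = 2 := by norm_num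
  rw [this]; exact hf
lemma sq_integrable (hf : MemLp f 2 μ) : Integrable (fun a => ‖f a‖ ^ (2:ℝ)) μ := by
  simpa using hf.integrable_norm_rpow (by norm_num) (by norm_num)
lemma nr2_eq (hf : MemLp f 2 μ) :
    nr2 f μ = (∫ a, ‖f a‖ ^ (2:ℝ) ∂μ) ^ ((2:ℝ)⁻¹) := by
  have h := hf.eLpNorm_eq_integral_rpow_norm (by norm_num) (by norm_num)
  have hX : 0 ≤ ∫ a, ‖f a‖ ^ ((2:ℝ≥0∞).toReal) ∂μ :=
    integral_nonneg fun a => Real.rpow_nonneg (norm_nonneg _) _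
  rw [nr2, h, ENNReal.toReal_ofReal (Real.rpow_nonneg hX _)]
  norm_num
lemma integral_sq_eq (hf : MemLp f 2 μ) :
    ∫ a, ‖f a‖ ^ (2:ℝ) ∂μ = nr2 f μ * nr2 f μ := by
  have hX : 0 ≤ ∫ a, ‖f a‖ ^ (2:ℝ) ∂μ :=
    integral_nonneg fun a => Real.rpow_nonneg (norm_nonneg _) _
  rw [nr2_eq hf, ← Real.rpow_add' hX (by norm_num)]
  norm_num
lemma CS2 (hf : MemLp f 2 μ) (hg : MemLp g 2 μ) :
    ∫ a, ‖f a‖ * ‖g a‖ ∂μ ≤ nr2 f μ * nr2 g μ := by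
  have h := integral_mul_norm_le_Lp_mul_Lq two_conj (memLp2' hf) (memLp2' hg)
  rw [nr2_eq hf, nr2_eq hg]
  simpa [one_div] using h
lemma integrable_mul (hf : MemLp f 2 μ) (hg : MemLp g 2 μ) :
    Integrable (fun a => f a * g a) μ := by
  have hsq : ∀ x : ℝ, 0 ≤ x → x ^ (2:ℝ) = x * x := fun x hx => by
    rw [show (2:ℝ) = ((2:ℕ):ℝ) by norm_num, Real.rpow_natCast]; ring
  refine Integrable.mono' (((sq_integrable hf).add (sq_integrable hg)).div_const 2)
    (hf.1.mul hg.1) (Eventually.of_forall fun a => ?_)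
  simp only [Pi.add_apply, norm_mul]
  rw [hsq _ (norm_nonneg (f a)), hsq _ (norm_nonneg (g a))]
  nlinarith [norm_nonneg (f a), norm_nonneg (g a), sq_nonneg (‖f a‖ - ‖g a‖)]
lemma nr2_mono (hg : MemLp g 2 μ) (h : ∀ᵐ a ∂μ, ‖f a‖ ≤ ‖g a‖) : nr2 f μ ≤ nr2 g μ :=
  ENNReal.toReal_mono hg.2.ne (eLpNorm_mono_ae h)
lemma nr2_restrict_le (s : Set α) (hf : MemLp f 2 μ) : nr2 f (μ.restrict s) ≤ nr2 f μ :=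
  ENNReal.toReal_mono hf.2.ne (eLpNorm_mono_measure f Measure.restrict_le_self)
lemma memLp_conj (hf : MemLp f 2 μ) : MemLp (fun a => (starRingEnd ℂ) (f a)) 2 μ :=
  MemLp.of_le hf (Complex.continuous_conj.comp_aestronglyMeasurable hf.1)
    (Eventually.of_forall fun a => by simp)

-- new:
lemma szego_le (Pi : (ℝ → ℂ) → ℝ → ℂ) (hPi : IsSzego Pi) {g : ℝ → ℂ}
    (hg : MemLp g 2 (volume : Measure ℝ)) :
    MemLp (Pi g) 2 (volume : Measure ℝ) ∧ nr2 (Pi g) volume ≤ nr2 g volume := by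
  obtain ⟨hH, horth⟩ := hPi g hg
  have hP : MemLp (Pi g) 2 (volume : Measure ℝ) := hH.1
  refine ⟨hP, ?_⟩
  have h0 := horth (Pi g) hH
  have hPc : MemLp (fun x => (starRingEnd ℂ) (Pi g x)) 2 (volume : Measure ℝ) := memLp_conj hP
  have hint1 : Integrable (fun x => g x * (starRingEnd ℂ) (Pi g x)) volume :=
    integrable_mul hg hPc
  have hint2 : Integrable (fun x => Pi g x * (starRingEnd ℂ) (Pi g x)) volume :=
    integrable_mul hP hPc
  have hsub : ∫ x : ℝ, (g x - Pi g x) * (starRingEnd ℂ) (Pi g x)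
      = (∫ x : ℝ, g x * (starRingEnd ℂ) (Pi g x))
        - ∫ x : ℝ, Pi g x * (starRingEnd ℂ) (Pi g x) := by
    rw [← integral_sub hint1 hint2]
    congr 1; funext x; ring
  have heq : ∫ x : ℝ, g x * (starRingEnd ℂ) (Pi g x)
      = ∫ x : ℝ, Pi g x * (starRingEnd ℂ) (Pi g x) := by
    have := h0; rw [hsub] at this; exact sub_eq_zero.mp this
  have hsqeq : ∫ x : ℝ, Pi g x * (starRingEnd ℂ) (Pi g x)
      = ((∫ x : ℝ, ‖Pi g x‖ ^ (2:ℝ)) : ℝ) := by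
    have hpt : ∀ x : ℝ, Pi g x * (starRingEnd ℂ) (Pi g x)
        = ((‖Pi g x‖ ^ (2:ℝ) : ℝ) : ℂ) := by
      intro x
      rw [Complex.mul_conj]
      norm_cast
      simp [← Complex.sq_norm]
    rw [integral_congr_ae (Eventually.of_forall hpt)]
    exact integral_ofReal
  set P : ℝ := ∫ x : ℝ, ‖Pi g x‖ ^ (2:ℝ) with hPdef
  have hPnn : 0 ≤ P := integral_nonneg fun a => Real.rpow_nonneg (norm_nonneg _) _
  have hle : P ≤ nr2 g volume * nr2 (Pi g) volume := by
    calc P = ‖(P : ℂ)‖ := by rw [Complex.norm_real, Real.norm_of_nonneg hPnn]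
      _ = ‖∫ x : ℝ, g x * (starRingEnd ℂ) (Pi g x)‖ := by rw [heq, hsqeq]
      _ ≤ ∫ x : ℝ, ‖g x * (starRingEnd ℂ) (Pi g x)‖ := norm_integral_le_integral_norm _
      _ = ∫ x : ℝ, ‖g x‖ * ‖Pi g x‖ := by
          congr 1; funext x; simp [norm_mul]
      _ ≤ nr2 g volume * nr2 (Pi g) volume := CS2 hg hP
  have hPeq : P = nr2 (Pi g) volume * nr2 (Pi g) volume := integral_sq_eq hP
  rcases eq_or_lt_of_le (nr2_nonneg : (0:ℝ) ≤ nr2 (Pi g) volume) with h | h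
  · rw [← h]; exact nr2_nonneg
  · exact le_of_mul_le_mul_right (by rw [← hPeq]; exact hle) h

lemma setint_bound {v g : ℝ → ℂ} (hv : MemLp v 2 (volume : Measure ℝ))
    (hg : MemLp g 2 (volume : Measure ℝ))
    {e : ℝ → ℂ} (he : ∀ y, ‖e y‖ = 1) (s : Set ℝ) :
    ‖∫ y in s, e y * v y * g y‖ ≤ nr2 v ((volume : Measure ℝ).restrict s) * nr2 g volume := by
  calc ‖∫ y in s, e y * v y * g y‖ ≤ ∫ y in s, ‖e y * v y * g y‖ :=
        norm_integral_le_integral_norm _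
    _ = ∫ y in s, ‖v y‖ * ‖g y‖ := by
        refine integral_congr_ae (Eventually.of_forall fun y => ?_)
        simp [norm_mul, he y]
    _ ≤ nr2 v (volume.restrict s) * nr2 g (volume.restrict s) :=
        CS2 (hv.restrict s) (hg.restrict s)
    _ ≤ nr2 v (volume.restrict s) * nr2 g volume :=
        mul_le_mul_of_nonneg_left (nr2_restrict_le s hg) nr2_nonneg


lemma norm_exp_eq_one {z : ℂ} (h : z.re = 0) : ‖Complex.exp z‖ = 1 := by
  rw [Complex.norm_exp, h, Real.exp_zero]

end KopAux

/-- **Compactness of `K_λ` on `L^∞(ℝ)`.** Let `u ∈ L²₊(ℝ)` and `λ > 0`. Any linear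
realisation `T` of the operator `K_λ` on the Banach space `L^∞(ℝ)` is a compact
operator. -/
theorem Kop_compact
    (Pi : (ℝ → ℂ) → ℝ → ℂ) (hPi : IsSzego Pi)
    (u : ℝ → ℂ) (hu : HardyLp 2 u)
    (lam : ℝ) (hlam : 0 < lam)
    (T : Lp ℂ ⊤ (volume : Measure ℝ) →ₗ[ℂ] Lp ℂ ⊤ (volume : Measure ℝ))
    (hT : ∀ a : Lp ℂ ⊤ (volume : Measure ℝ),
      (T a : ℝ → ℂ) =ᵐ[(volume : Measure ℝ)] Kop Pi u lam (a : ℝ → ℂ)) :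
    IsCompactOperator T := by
  classical
  obtain ⟨hu2, -⟩ := hu
  set Ball : Set (Lp ℂ ⊤ (volume : Measure ℝ)) := Metric.closedBall 0 1 with hBall_def
  set e : ℝ → ℂ := fun y => Complex.exp (-(Complex.I) * lam * y) with he_def
  have he : ∀ y : ℝ, ‖e y‖ = 1 := by
    intro y
    refine KopAux.norm_exp_eq_one ?_
    simp
  have hem : AEStronglyMeasurable e (volume : Measure ℝ) :=
    (Complex.continuous_exp.comp
      ((continuous_const.mul Complex.continuous_ofReal))).aestronglyMeasurable
  set G : (ℝ → ℂ) → ℝ → ℂ :=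
    fun f => Pi (fun z => (starRingEnd ℂ) (u z) * Complex.exp (Complex.I * lam * z) * f z)
    with hG_def
  set Cu : ℝ := KopAux.nr2 u volume with hCu_def
  have hCu0 : 0 ≤ Cu := KopAux.nr2_nonneg
  -- elements of the unit ball are a.e. bounded by 1
  have hball : ∀ a : Lp ℂ ⊤ (volume : Measure ℝ), a ∈ Ball →
      ∀ᵐ y ∂(volume : Measure ℝ), ‖(a : ℝ → ℂ) y‖ ≤ 1 := by
    intro a ha
    have h3 := mem_closedBall_zero_iff.mp ha
    rw [Lp.norm_def] at h3
    have h4 : eLpNorm (⇑a) ⊤ volume ≠ ∞ := Lp.eLpNorm_ne_top a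
    have h2 : eLpNormEssSup (⇑a) volume ≤ 1 := by
      rw [eLpNorm_exponent_top] at h3 h4
      have := (ENNReal.le_ofReal_iff_toReal_le h4 zero_le_one).mpr h3
      rwa [ENNReal.ofReal_one] at this
    filter_upwards [ae_le_eLpNormEssSup (f := ⇑a) (μ := (volume : Measure ℝ))] with y hy
    have h5 : (‖(⇑a) y‖₊ : ℝ≥0∞) ≤ 1 := hy.trans h2
    have h6 : ‖(⇑a) y‖₊ ≤ (1 : NNReal) := by exact_mod_cast h5
    exact_mod_cast h6
  -- the Szegő image is L² with norm at most Cu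
  have hGfact : ∀ f : ℝ → ℂ, AEStronglyMeasurable f (volume : Measure ℝ) →
      (∀ᵐ y ∂(volume : Measure ℝ), ‖f y‖ ≤ 1) →
      MemLp (G f) 2 (volume : Measure ℝ) ∧ KopAux.nr2 (G f) volume ≤ Cu := by
    intro f hfm hfb
    have hwb : ∀ᵐ y ∂(volume : Measure ℝ),
        ‖(starRingEnd ℂ) (u y) * Complex.exp (Complex.I * lam * y) * f y‖ ≤ ‖u y‖ := by
      filter_upwards [hfb] with y hy
      have hexp : ‖Complex.exp (Complex.I * lam * y)‖ = 1 := by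
        refine KopAux.norm_exp_eq_one ?_
        simp
      rw [norm_mul, norm_mul, hexp, RingHomIsometric.norm_map, mul_one]
      exact mul_le_of_le_one_right (norm_nonneg _) hy
    have hw : MemLp (fun z => (starRingEnd ℂ) (u z) * Complex.exp (Complex.I * lam * z) * f z)
        2 (volume : Measure ℝ) := by
      refine MemLp.of_le hu2 ?_ hwb
      exact ((Complex.continuous_conj.comp_aestronglyMeasurable hu2.1).mul
        ((Complex.continuous_exp.comp
          (continuous_const.mul Complex.continuous_ofReal)).aestronglyMeasurable)).mul hfm
    obtain ⟨hm, hle⟩ := KopAux.szego_le Pi hPi hw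
    exact ⟨hm, le_trans (hle.trans (KopAux.nr2_mono hu2 hwb)) le_rfl⟩
  -- integrability of the basic integrand
  have hInt : ∀ v : ℝ → ℂ, MemLp v 2 (volume : Measure ℝ) →
      ∀ g : ℝ → ℂ, MemLp g 2 (volume : Measure ℝ) →
      Integrable (fun y => e y * v y * g y) (volume : Measure ℝ) := by
    intro v hv g hg
    have hev : MemLp (fun y => e y * v y) 2 (volume : Measure ℝ) :=
      MemLp.of_le hv (hem.mul hv.1)
        (Eventually.of_forall fun y => by rw [norm_mul, he y, one_mul])
    exact KopAux.integrable_mul hev hg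
  set Kv : (ℝ → ℂ) → (ℝ → ℂ) → ℝ → ℂ :=
    fun v f x => ∫ y in Iic x, e y * v y * G f y with hKv_def
  have hKop : ∀ (f : ℝ → ℂ) (x : ℝ), Kop Pi u lam f x = -Complex.I * Kv u f x := fun f x => rfl
  -- interval difference bound
  have hKdiff : ∀ v : ℝ → ℂ, MemLp v 2 (volume : Measure ℝ) → ∀ f : ℝ → ℂ,
      MemLp (G f) 2 (volume : Measure ℝ) → ∀ x' x : ℝ, x' ≤ x →
      Kv v f x - Kv v f x' = ∫ y in Ioc x' x, e y * v y * G f y := by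
    intro v hv f hGf x' x hx
    rw [hKv_def]
    simp only
    rw [intervalIntegral.integral_Iic_sub_Iic ((hInt v hv (G f) hGf).integrableOn)
      ((hInt v hv (G f) hGf).integrableOn), intervalIntegral.integral_of_le hx]
  -- global bound
  have hKbound : ∀ v : ℝ → ℂ, MemLp v 2 (volume : Measure ℝ) → ∀ f : ℝ → ℂ,
      MemLp (G f) 2 (volume : Measure ℝ) → KopAux.nr2 (G f) volume ≤ Cu → ∀ x : ℝ,
      ‖Kv v f x‖ ≤ KopAux.nr2 v volume * Cu := by
    intro v hv f hGf hGle x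
    refine (KopAux.setint_bound hv hGf he (Iic x)).trans ?_
    have h1 := KopAux.nr2_restrict_le (μ := (volume : Measure ℝ)) (Iic x) hv
    exact mul_le_mul h1 hGle KopAux.nr2_nonneg KopAux.nr2_nonneg
  -- comparison between Kv u and Kv v
  have hApprox : ∀ v : ℝ → ℂ, MemLp v 2 (volume : Measure ℝ) → ∀ f : ℝ → ℂ,
      MemLp (G f) 2 (volume : Measure ℝ) → KopAux.nr2 (G f) volume ≤ Cu → ∀ x : ℝ,
      ‖Kv u f x - Kv v f x‖ ≤ KopAux.nr2 (u - v) volume * Cu := by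
    intro v hv f hGf hGle x
    have hdiff : Kv u f x - Kv v f x = ∫ y in Iic x, e y * (u - v) y * G f y := by
      rw [hKv_def]
      simp only
      rw [← integral_sub ((hInt u hu2 (G f) hGf).integrableOn)
        ((hInt v hv (G f) hGf).integrableOn)]
      refine integral_congr_ae (Eventually.of_forall fun y => ?_)
      simp only [_root_.Pi.sub_apply]
      ring
    rw [hdiff]
    refine (KopAux.setint_bound (hu2.sub hv) hGf he (Iic x)).trans ?_
    exact mul_le_mul (KopAux.nr2_restrict_le (Iic x) (hu2.sub hv)) hGle
      KopAux.nr2_nonneg KopAux.nr2_nonneg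
  -- total boundedness of the image of the unit ball
  have htb : TotallyBounded (T '' Ball) := by
    rw [Metric.totallyBounded_iff]
    intro ε hε
    set εu : ℝ := ε / (8 * (Cu + 1)) with hεu_def
    have hεu : 0 < εu := by positivity
    have hεuCu : εu * Cu ≤ ε / 8 := by
      rw [hεu_def, div_mul_eq_mul_div, div_le_div_iff₀ (by positivity) (by norm_num)]
      nlinarith [hε.le, hCu0]
    obtain ⟨v, hvcpt, hvclose, hvcont, hvmem⟩ :=
      hu2.exists_hasCompactSupport_eLpNorm_sub_le (by norm_num)
        (ε := ENNReal.ofReal εu) (ne_of_gt (ENNReal.ofReal_pos.mpr hεu))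
    have huv : KopAux.nr2 (u - v) volume ≤ εu := by
      have h1 := ENNReal.toReal_mono ENNReal.ofReal_ne_top hvclose
      rwa [ENNReal.toReal_ofReal hεu.le] at h1
    obtain ⟨B, hB⟩ := hvcont.bounded_above_of_compact_support hvcpt
    have hB0 : 0 ≤ B := le_trans (norm_nonneg _) (hB 0)
    obtain ⟨R0, hR0⟩ := hvcpt.isBounded.subset_closedBall 0
    set R : ℝ := max R0 0 + 1 with hR_def
    have hR1 : 1 ≤ R := by
      rw [hR_def]
      have := le_max_right R0 (0:ℝ)
      linarith
    have hvz : ∀ y : ℝ, R ≤ |y| → v y = 0 := by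
      intro y hy
      apply image_eq_zero_of_notMem_tsupport
      intro hmem
      have h1 := hR0 hmem
      rw [Metric.mem_closedBall, Real.dist_eq, sub_zero] at h1
      have h2 : R0 ≤ max R0 0 := le_max_left _ _
      rw [hR_def] at hy
      linarith
    -- δ and grid
    set t0 : ℝ := ε / (8 * (B + 1) * (Cu + 1)) with ht0_def
    have ht0 : 0 < t0 := by positivity
    set δ : ℝ := t0 ^ (2:ℝ) with hδ_def
    have hδ : 0 < δ := Real.rpow_pos_of_pos ht0 _
    have hδhalf : δ ^ ((2:ℝ)⁻¹) = t0 := by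
      rw [hδ_def, ← Real.rpow_mul ht0.le]
      norm_num
    have hδbound : B * δ ^ ((2:ℝ)⁻¹) * Cu ≤ ε / 8 := by
      rw [hδhalf, ht0_def]
      rw [show B * (ε / (8 * (B + 1) * (Cu + 1))) * Cu
          = ε * (B * Cu) / (8 * (B + 1) * (Cu + 1)) by ring]
      rw [div_le_div_iff₀ (by positivity) (by norm_num)]
      nlinarith [hε.le, hB0, hCu0, mul_nonneg hB0 hCu0,
        mul_nonneg hε.le (mul_nonneg hB0 hCu0), mul_nonneg hε.le (add_nonneg hB0 hCu0)]
    set n : ℕ := ⌈2 * R / δ⌉₊ with hn_def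
    set X : Fin (n + 1) → ℝ := fun i => -R + i * δ with hX_def
    have hgrid : ∀ x : ℝ, -R ≤ x → x ≤ R → ∃ i : Fin (n + 1), X i ≤ x ∧ x - X i ≤ δ := by
      intro x hx1 hx2
      have ht' : 0 ≤ (x + R) / δ := div_nonneg (by linarith) hδ.le
      have hlt : ⌊(x + R) / δ⌋₊ < n + 1 := by
        have h1 : (x + R) / δ ≤ 2 * R / δ := by
          gcongr
          linarith
        have h2 : (x + R) / δ ≤ (n : ℝ) := h1.trans (Nat.le_ceil _)
        have h3 := Nat.floor_mono h2
        rw [Nat.floor_natCast] at h3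
        omega
      refine ⟨⟨⌊(x + R) / δ⌋₊, hlt⟩, ?_, ?_⟩
      · have h2 : (⌊(x + R) / δ⌋₊ : ℝ) ≤ (x + R) / δ := Nat.floor_le ht'
        have h3 := mul_le_mul_of_nonneg_right h2 hδ.le
        rw [div_mul_cancel₀ _ hδ.ne'] at h3
        simp only [hX_def]
        push_cast
        linarith
      · have h4 : (x + R) / δ - 1 < (⌊(x + R) / δ⌋₊ : ℝ) := Nat.sub_one_lt_floor _
        have h5 := mul_le_mul_of_nonneg_right h4.le hδ.le
        rw [sub_mul, div_mul_cancel₀ _ hδ.ne', one_mul] at h5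
        simp only [hX_def]
        push_cast
        linarith
    -- clamping
    have hzero : ∀ f : ℝ → ℂ, ∀ z : ℝ, z ≤ -R → Kv v f z = 0 := by
      intro f z hz
      rw [hKv_def]
      simp only
      apply setIntegral_eq_zero_of_forall_eq_zero
      intro y hy
      rw [mem_Iic] at hy
      have : v y = 0 := hvz y (le_abs.mpr (Or.inr (by linarith)))
      simp [this]
    have hclamp : ∀ f : ℝ → ℂ, MemLp (G f) 2 (volume : Measure ℝ) → ∀ x : ℝ,
        Kv v f x = Kv v f (max (-R) (min x R)) := by
      intro f hGf x
      rcases le_total x (-R) with hxR | hxR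
      · have hxc_eq : max (-R) (min x R) = -R := by
          rw [min_eq_left (by linarith), max_eq_left hxR]
        rw [hxc_eq, hzero f x hxR, hzero f (-R) le_rfl]
      · rcases le_total R x with hxR2 | hxR2
        · have hxc_eq : max (-R) (min x R) = R := by
            rw [min_eq_right hxR2, max_eq_right (by linarith)]
          rw [hxc_eq]
          have hd := hKdiff v hvmem f hGf R x hxR2
          have hz : ∫ y in Ioc R x, e y * v y * G f y = 0 := by
            apply setIntegral_eq_zero_of_forall_eq_zero
            intro y hy
            have : v y = 0 := hvz y (le_abs.mpr (Or.inl hy.1.le))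
            simp [this]
          rw [hz] at hd
          exact sub_eq_zero.mp hd
        · have hxc_eq : max (-R) (min x R) = x := by
            rw [min_eq_left hxR2, max_eq_right hxR]
          rw [hxc_eq]
    -- modulus of continuity bound on short intervals
    have hmod : ∀ f : ℝ → ℂ, MemLp (G f) 2 (volume : Measure ℝ) →
        KopAux.nr2 (G f) volume ≤ Cu → ∀ x' x : ℝ, x' ≤ x → x - x' ≤ δ →
        ‖Kv v f x - Kv v f x'‖ ≤ ε / 8 := by
      intro f hGf hGle x' x hx hxδ
      rw [hKdiff v hvmem f hGf x' x hx]
      refine (KopAux.setint_bound hvmem hGf he (Ioc x' x)).trans ?_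
      have hres : KopAux.nr2 v ((volume : Measure ℝ).restrict (Ioc x' x))
          ≤ B * δ ^ ((2:ℝ)⁻¹) := by
        have h1 := eLpNorm_le_of_ae_bound (μ := (volume : Measure ℝ).restrict (Ioc x' x))
          (p := 2) (f := v) (Eventually.of_forall hB)
        have h2 : ((volume : Measure ℝ).restrict (Ioc x' x)) Set.univ
            = ENNReal.ofReal (x - x') := by
          rw [Measure.restrict_apply_univ, Real.volume_Ioc]
        rw [h2] at h1
        have h3 := ENNReal.toReal_mono ?_ h1
        · rw [KopAux.nr2]
          refine h3.trans ?_
          rw [ENNReal.toReal_mul, ← ENNReal.toReal_rpow, ENNReal.toReal_ofReal (by linarith),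
            ENNReal.toReal_ofReal hB0]
          have h4 : (x - x') ^ ((2:ℝ≥0∞).toReal⁻¹) ≤ δ ^ ((2:ℝ)⁻¹) := by
            rw [show (2:ℝ≥0∞).toReal⁻¹ = (2:ℝ)⁻¹ by norm_num]
            exact Real.rpow_le_rpow (by linarith) hxδ (by norm_num)
          calc (x - x') ^ ((2:ℝ≥0∞).toReal⁻¹) * B ≤ δ ^ ((2:ℝ)⁻¹) * B :=
                mul_le_mul_of_nonneg_right h4 hB0
            _ = B * δ ^ ((2:ℝ)⁻¹) := by ring
        · exact ENNReal.mul_ne_top (by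
            refine ENNReal.rpow_ne_top_of_nonneg (by norm_num) ENNReal.ofReal_ne_top)
            ENNReal.ofReal_ne_top
      calc KopAux.nr2 v ((volume : Measure ℝ).restrict (Ioc x' x)) * KopAux.nr2 (G f) volume
          ≤ (B * δ ^ ((2:ℝ)⁻¹)) * Cu :=
            mul_le_mul hres hGle KopAux.nr2_nonneg
              (mul_nonneg hB0 (Real.rpow_nonneg hδ.le _))
        _ = B * δ ^ ((2:ℝ)⁻¹) * Cu := by ring
        _ ≤ ε / 8 := hδbound
    -- the main estimate for two ball elements agreeing on the grid
    have hmain : ∀ a ∈ Ball, ∀ a' ∈ Ball,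
        (∀ i : Fin (n + 1), ‖Kv v (⇑a) (X i) - Kv v (⇑a') (X i)‖ ≤ ε / 4) →
        dist (T a) (T a') ≤ 3 * ε / 4 := by
      intro a ha a' ha' hgridclose
      obtain ⟨hGa, hGalen⟩ := hGfact (⇑a) (Lp.aestronglyMeasurable a) (hball a ha)
      obtain ⟨hGa', hGalen'⟩ := hGfact (⇑a') (Lp.aestronglyMeasurable a') (hball a' ha')
      have hpt : ∀ x : ℝ, ‖Kop Pi u lam (⇑a) x - Kop Pi u lam (⇑a') x‖ ≤ 3 * ε / 4 := by
        intro x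
        set xc : ℝ := max (-R) (min x R) with hxc_def
        have hxc1 : -R ≤ xc := le_max_left _ _
        have hxc2 : xc ≤ R := max_le (by linarith) (min_le_right _ _)
        obtain ⟨i, hi1, hi2⟩ := hgrid xc hxc1 hxc2
        have hnegI : ∀ z z' : ℂ, ‖-Complex.I * z - -Complex.I * z'‖ = ‖z - z'‖ := by
          intro z z'
          rw [show -Complex.I * z - -Complex.I * z' = -Complex.I * (z - z') by ring,
            norm_mul]
          simp
        rw [hKop, hKop, hnegI]
        have hstep : ∀ f : ℝ → ℂ, MemLp (G f) 2 (volume : Measure ℝ) →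
            KopAux.nr2 (G f) volume ≤ Cu →
            ‖Kv v f xc - Kv v f (X i)‖ ≤ ε / 8 := fun f hGf hGle =>
          hmod f hGf hGle (X i) xc hi1 hi2
        have h1 : ‖Kv u (⇑a) x - Kv v (⇑a) x‖ ≤ ε / 8 := by
          refine (hApprox v hvmem (⇑a) hGa hGalen x).trans ?_
          exact (mul_le_mul_of_nonneg_right huv hCu0).trans hεuCu
        have h2 : ‖Kv u (⇑a') x - Kv v (⇑a') x‖ ≤ ε / 8 := by
          refine (hApprox v hvmem (⇑a') hGa' hGalen' x).trans ?_
          exact (mul_le_mul_of_nonneg_right huv hCu0).trans hεuCu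
        have h3 : ‖Kv v (⇑a) x - Kv v (⇑a') x‖ ≤ ε / 8 + ε / 4 + ε / 8 := by
          rw [hclamp (⇑a) hGa x, hclamp (⇑a') hGa' x, ← hxc_def]
          calc ‖Kv v (⇑a) xc - Kv v (⇑a') xc‖
              ≤ ‖Kv v (⇑a) xc - Kv v (⇑a) (X i)‖ + ‖Kv v (⇑a) (X i) - Kv v (⇑a') (X i)‖
                + ‖Kv v (⇑a') (X i) - Kv v (⇑a') xc‖ := by
                have := norm_sub_le_norm_sub_add_norm_sub (Kv v (⇑a) xc) (Kv v (⇑a) (X i))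
                  (Kv v (⇑a') xc)
                calc ‖Kv v (⇑a) xc - Kv v (⇑a') xc‖
                    ≤ ‖Kv v (⇑a) xc - Kv v (⇑a) (X i)‖
                      + ‖Kv v (⇑a) (X i) - Kv v (⇑a') xc‖ := by
                      exact norm_sub_le_norm_sub_add_norm_sub _ _ _
                  _ ≤ ‖Kv v (⇑a) xc - Kv v (⇑a) (X i)‖
                      + (‖Kv v (⇑a) (X i) - Kv v (⇑a') (X i)‖
                        + ‖Kv v (⇑a') (X i) - Kv v (⇑a') xc‖) := by
                      gcongr
                      exact norm_sub_le_norm_sub_add_norm_sub _ _ _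
                  _ = _ := by ring
            _ ≤ ε / 8 + ε / 4 + ε / 8 := by
                gcongr
                · exact hstep (⇑a) hGa hGalen
                · exact hgridclose i
                · rw [norm_sub_rev]
                  exact hstep (⇑a') hGa' hGalen'
        calc ‖Kv u (⇑a) x - Kv u (⇑a') x‖
            ≤ ‖Kv u (⇑a) x - Kv v (⇑a) x‖ + ‖Kv v (⇑a) x - Kv v (⇑a') x‖
              + ‖Kv v (⇑a') x - Kv u (⇑a') x‖ := by
              calc ‖Kv u (⇑a) x - Kv u (⇑a') x‖
                  ≤ ‖Kv u (⇑a) x - Kv v (⇑a) x‖ + ‖Kv v (⇑a) x - Kv u (⇑a') x‖ :=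
                    norm_sub_le_norm_sub_add_norm_sub _ _ _
                _ ≤ ‖Kv u (⇑a) x - Kv v (⇑a) x‖ + (‖Kv v (⇑a) x - Kv v (⇑a') x‖
                    + ‖Kv v (⇑a') x - Kv u (⇑a') x‖) := by
                    gcongr
                    exact norm_sub_le_norm_sub_add_norm_sub _ _ _
                _ = _ := by ring
          _ ≤ ε / 8 + (ε / 8 + ε / 4 + ε / 8) + ε / 8 := by
              have h2' : ‖Kv v (⇑a') x - Kv u (⇑a') x‖ ≤ ε / 8 := by
                rw [norm_sub_rev]; exact h2
              exact add_le_add (add_le_add h1 h3) h2'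
          _ = 3 * ε / 4 := by ring
      rw [dist_eq_norm, Lp.norm_def, eLpNorm_exponent_top]
      have hb : ∀ᵐ x ∂(volume : Measure ℝ), ‖(⇑(T a - T a')) x‖ ≤ 3 * ε / 4 := by
        filter_upwards [Lp.coeFn_sub (T a) (T a'), hT a, hT a'] with x hx1 hx2 hx3
        rw [hx1, _root_.Pi.sub_apply, hx2, hx3]
        exact hpt x
      have h5 := eLpNormEssSup_le_of_ae_bound hb
      refine le_trans (ENNReal.toReal_mono ENNReal.ofReal_ne_top h5) ?_
      rw [ENNReal.toReal_ofReal (by positivity)]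
    -- finite-dimensional approximation map
    set Φ : Lp ℂ ⊤ (volume : Measure ℝ) → (Fin (n + 1) → ℂ) :=
      fun b => fun i => Kv v (⇑b) (X i) with hΦ_def
    have hΦbound : ∀ b ∈ Ball, ‖Φ b‖ ≤ KopAux.nr2 v volume * Cu := by
      intro b hb
      rw [pi_norm_le_iff_of_nonneg (mul_nonneg KopAux.nr2_nonneg hCu0)]
      intro i
      obtain ⟨hGb, hGble⟩ := hGfact (⇑b) (Lp.aestronglyMeasurable b) (hball b hb)
      exact hKbound v hvmem (⇑b) hGb hGble (X i)
    have htbΦ : TotallyBounded (Φ '' Ball) := by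
      refine TotallyBounded.subset ?_
        (isCompact_closedBall (0 : Fin (n + 1) → ℂ) (KopAux.nr2 v volume * Cu)).totallyBounded
      rintro p ⟨b, hb, rfl⟩
      exact mem_closedBall_zero_iff.mpr (hΦbound b hb)
    obtain ⟨s, hsfin, hscover⟩ := (Metric.totallyBounded_iff.mp htbΦ) (ε / 8) (by positivity)
    set pick : (Fin (n + 1) → ℂ) → Lp ℂ ⊤ (volume : Measure ℝ) := fun c =>
      if h : ∃ b, b ∈ Ball ∧ Φ b ∈ Metric.ball c (ε / 8) then h.choose else 0 with hpick_def
    refine ⟨(fun c => T (pick c)) '' s, hsfin.image _, ?_⟩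
    rintro w ⟨a, ha, rfl⟩
    have hΦa := hscover (mem_image_of_mem Φ ha)
    rw [mem_iUnion₂] at hΦa
    obtain ⟨c, hct, hc⟩ := hΦa
    have hex : ∃ b, b ∈ Ball ∧ Φ b ∈ Metric.ball c (ε / 8) := ⟨a, ha, hc⟩
    have hpc : pick c ∈ Ball ∧ Φ (pick c) ∈ Metric.ball c (ε / 8) := by
      rw [hpick_def]
      simp only [dif_pos hex]
      exact hex.choose_spec
    rw [mem_iUnion₂]
    refine ⟨T (pick c), mem_image_of_mem _ hct, ?_⟩
    rw [Metric.mem_ball]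
    have hcoord : ∀ i : Fin (n + 1), ‖Kv v (⇑a) (X i) - Kv v (⇑(pick c)) (X i)‖ ≤ ε / 4 := by
      intro i
      have h1 : dist (Φ a) (Φ (pick c)) ≤ ε / 8 + ε / 8 := by
        calc dist (Φ a) (Φ (pick c)) ≤ dist (Φ a) c + dist c (Φ (pick c)) := dist_triangle _ _ _
          _ ≤ ε / 8 + ε / 8 := by
              refine add_le_add (le_of_lt (Metric.mem_ball.mp hc)) ?_
              rw [dist_comm]
              exact le_of_lt (Metric.mem_ball.mp hpc.2)
      have h2 := dist_le_pi_dist (Φ a) (Φ (pick c)) i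
      rw [hΦ_def] at h2
      simp only at h2
      rw [dist_eq_norm] at h2
      refine h2.trans (h1.trans (by linarith))
    have hfinal := hmain a ha (pick c) hpc.1 hcoord
    calc dist (T a) (T (pick c)) ≤ 3 * ε / 4 := hfinal
      _ < ε := by linarith
  -- conclude
  refine ⟨closure (T '' Ball), TotallyBounded.isCompact_of_isClosed htb.closure
    isClosed_closure, ?_⟩
  have hnb : Ball ∈ 𝓝 (0 : Lp ℂ ⊤ (volume : Measure ℝ)) :=
    Metric.closedBall_mem_nhds 0 one_pos
  exact mem_of_superset hnb fun b hb => subset_closure (mem_image_of_mem T hb)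
end
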